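/- arXiv:1909.05477 — 2 statements merged into one kernel-verified Lean document; each statement's English description precedes it below -/
import Mathlib

section
/- For the greedy algorithm on weighted maximum coverage: given a finite collection of sets S_1,...,S_m over a finite ground set with nonnegative weights w, if the greedy algorithm at each step picks the set covering the maximum uncovered weight, then after i steps the total weight covered by the greedy solution is at least (1 - ((i-1)/i)^i) times the maximum weight coverable by any union of i sets from the collection. -/
open Finset

lemma sum_biUnion_le_aux {ι α : Type*} [DecidableEq α] (T : Finset ι) (g : ι → Finset α)
    (f : α → ℝ) (hf : ∀ a, 0 ≤ f a) :
    ∑ a ∈ T.biUnion g, f a ≤ ∑ j ∈ T, ∑ a ∈ g j, f a := by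
  classical
  induction T using Finset.induction with
  | empty => simp
  | @insert a s h ih =>
    rw [Finset.biUnion_insert, Finset.sum_insert h]
    have h1 : ∑ x ∈ g a ∪ s.biUnion g, f x
        = ∑ x ∈ g a, f x + ∑ x ∈ s.biUnion g \ g a, f x := by
      rw [← Finset.sum_union Finset.disjoint_sdiff, Finset.union_sdiff_self_eq_union]
    have h2 : ∑ x ∈ s.biUnion g \ g a, f x ≤ ∑ x ∈ s.biUnion g, f x :=
      Finset.sum_le_sum_of_subset_of_nonneg (Finset.sdiff_subset) (fun x _ _ => hf x)
    linarith

/-- Greedy weighted maximum coverage: after `i` steps, the greedy solution covers at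
least `(1 - ((i-1)/i)^i)` of the best coverage achievable by any `i` sets. -/
theorem greedy_max_coverage_bound {U : Type*} [DecidableEq U] [Fintype U] {m : ℕ}
    (w : U → NNReal) (S : Fin m → Finset U)
    (pick : ℕ → Fin m)
    (covered : ℕ → Finset U)
    (hcov : ∀ i, covered i = (Finset.range i).biUnion (fun t => S (pick t)))
    (hgreedy : ∀ i, ∀ j : Fin m,
      ∑ u ∈ S j \ covered i, (w u : ℝ) ≤ ∑ u ∈ S (pick i) \ covered i, (w u : ℝ)) :
    ∀ i : ℕ, 0 < i → ∀ T : Finset (Fin m), T.card = i →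
      (1 - (((i : ℝ) - 1) / i) ^ i) * (∑ u ∈ T.biUnion S, (w u : ℝ))
        ≤ ∑ u ∈ covered i, (w u : ℝ) := by
  intro i hi T hT
  set f : ℕ → ℝ := fun t => ∑ u ∈ covered t, (w u : ℝ) with hf
  set OPT : ℝ := ∑ u ∈ T.biUnion S, (w u : ℝ) with hOPT
  set r : ℝ := ((i : ℝ) - 1) / i with hr
  have hipos : (0 : ℝ) < i := by exact_mod_cast hi
  have hi1 : (1 : ℝ) ≤ i := by exact_mod_cast hi
  have hr0 : 0 ≤ r := div_nonneg (by linarith) (le_of_lt hipos)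
  have hwpos : ∀ u : U, (0:ℝ) ≤ (w u : ℝ) := fun u => (w u).coe_nonneg
  -- one-step recurrence
  have step : ∀ t, OPT - f (t + 1) ≤ r * (OPT - f t) := by
    intro t
    set g : ℝ := ∑ u ∈ S (pick t) \ covered t, (w u : ℝ) with hg
    have hsucc : covered (t + 1) = covered t ∪ S (pick t) := by
      rw [hcov, hcov, Finset.range_add_one, Finset.biUnion_insert, Finset.union_comm]
    have hgain : f (t + 1) = f t + g := by
      simp only [hf, hsucc]
      rw [← Finset.union_sdiff_self_eq_union, Finset.sum_union Finset.disjoint_sdiff]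
    -- OPT - f t ≤ i * g
    have hbound : OPT - f t ≤ (i : ℝ) * g := by
      have h1 : OPT ≤ f t + ∑ u ∈ T.biUnion S \ covered t, (w u : ℝ) := by
        have hsub : T.biUnion S ⊆ covered t ∪ (T.biUnion S \ covered t) := by
          intro x hx
          by_cases hxc : x ∈ covered t
          · exact Finset.mem_union_left _ hxc
          · exact Finset.mem_union_right _ (Finset.mem_sdiff.mpr ⟨hx, hxc⟩)
        calc OPT ≤ ∑ u ∈ covered t ∪ (T.biUnion S \ covered t), (w u : ℝ) :=
              Finset.sum_le_sum_of_subset_of_nonneg hsub (fun u _ _ => hwpos u)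
          _ = f t + ∑ u ∈ T.biUnion S \ covered t, (w u : ℝ) :=
              Finset.sum_union Finset.disjoint_sdiff
      have h2 : T.biUnion S \ covered t = T.biUnion (fun j => S j \ covered t) := by
        ext x
        simp only [Finset.mem_sdiff, Finset.mem_biUnion]
        tauto
      have h3 : ∑ u ∈ T.biUnion S \ covered t, (w u : ℝ)
          ≤ ∑ j ∈ T, ∑ u ∈ S j \ covered t, (w u : ℝ) := by
        rw [h2]
        exact sum_biUnion_le_aux T _ _ hwpos
      have h4 : ∑ j ∈ T, ∑ u ∈ S j \ covered t, (w u : ℝ) ≤ (i : ℝ) * g := by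
        calc ∑ j ∈ T, ∑ u ∈ S j \ covered t, (w u : ℝ)
            ≤ ∑ _j ∈ T, g := Finset.sum_le_sum (fun j _ => hgreedy t j)
          _ = (i : ℝ) * g := by rw [Finset.sum_const, hT]; push_cast; ring
      linarith
    have hdiv : (OPT - f t) / (i : ℝ) ≤ g := by
      rw [div_le_iff₀ hipos]; linarith
    have : r * (OPT - f t) = (OPT - f t) - (OPT - f t) / i := by
      rw [hr]; field_simp
    rw [hgain, this]
    linarith
  -- induction: OPT - f t ≤ r^t * OPT
  have main : ∀ t, OPT - f t ≤ r ^ t * OPT := by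
    intro t
    induction t with
    | zero =>
      have : f 0 = 0 := by simp [hf, hcov]
      simp [this]
    | succ t ih =>
      calc OPT - f (t + 1) ≤ r * (OPT - f t) := step t
        _ ≤ r * (r ^ t * OPT) := mul_le_mul_of_nonneg_left ih hr0
        _ = r ^ (t + 1) * OPT := by ring
  have := main i
  linarith [this]
end

section
/- In the maximum entropy trajectory model, if two constraint sets C₁ and C₂ are both consistent with the demonstrations, then C₁ yields a strictly higher demonstration likelihood than C₂ if and only if the probability mass (under the unconstrained max-ent distribution) of trajectories eliminated by C₁ strictly exceeds that eliminated by C₂. -/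
open Finset

/-- For constraints consistent with the demonstrations, `C₁` yields a strictly
higher demonstration likelihood than `C₂` iff the unconstrained max-ent probability
mass eliminated by `C₁` strictly exceeds that eliminated by `C₂`. -/
theorem strict_likelihood_iff_strict_eliminated_mass
    {Ξ : Type*} [Fintype Ξ] [DecidableEq Ξ] [Nonempty Ξ]
    (R : Ξ → ℝ)
    (Z : ℝ) (hZ : Z = ∑ ξ : Ξ, Real.exp (R ξ))
    (P : Ξ → ℝ) (hP : ∀ ξ, P ξ = Real.exp (R ξ) / Z)
    (elim₁ elim₂ : Finset Ξ) (h₁ : elim₁ ⊂ Finset.univ) (h₂ : elim₂ ⊂ Finset.univ)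
    (D : Finset Ξ) (hD : D.Nonempty)
    (hD₁ : D ⊆ Finset.univ \ elim₁) (hD₂ : D ⊆ Finset.univ \ elim₂)
    (lik : Finset Ξ → ℝ)
    (hlik : ∀ E : Finset Ξ, lik E =
      (∏ ξ ∈ D, Real.exp (R ξ)) / (∑ ξ ∈ Finset.univ \ E, Real.exp (R ξ)) ^ D.card) :
    lik elim₂ < lik elim₁ ↔ ∑ ξ ∈ elim₂, P ξ < ∑ ξ ∈ elim₁, P ξ := by
  have hZpos : 0 < Z := by
    rw [hZ]
    exact Finset.sum_pos (fun ξ _ => Real.exp_pos _) Finset.univ_nonempty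
  -- survivor sums
  set S₁ := ∑ ξ ∈ Finset.univ \ elim₁, Real.exp (R ξ) with hS₁
  set S₂ := ∑ ξ ∈ Finset.univ \ elim₂, Real.exp (R ξ) with hS₂
  have hne₁ : (Finset.univ \ elim₁).Nonempty := hD.mono hD₁
  have hne₂ : (Finset.univ \ elim₂).Nonempty := hD.mono hD₂
  have hS₁pos : 0 < S₁ := Finset.sum_pos (fun ξ _ => Real.exp_pos _) hne₁
  have hS₂pos : 0 < S₂ := Finset.sum_pos (fun ξ _ => Real.exp_pos _) hne₂
  have hApos : 0 < ∏ ξ ∈ D, Real.exp (R ξ) :=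
    Finset.prod_pos (fun ξ _ => Real.exp_pos _)
  have hsplit : ∀ E : Finset Ξ,
      (∑ ξ ∈ E, Real.exp (R ξ)) + ∑ ξ ∈ Finset.univ \ E, Real.exp (R ξ) = Z := by
    intro E
    rw [hZ, Finset.sum_sdiff_eq_sub (Finset.subset_univ E)]
    ring
  have key : lik elim₂ < lik elim₁ ↔ S₁ < S₂ := by
    rw [hlik, hlik]
    rw [div_lt_div_iff₀ (pow_pos hS₂pos _) (pow_pos hS₁pos _)]
    constructor
    · intro h
      have hp : S₁ ^ D.card < S₂ ^ D.card := lt_of_mul_lt_mul_left h hApos.le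
      exact lt_of_pow_lt_pow_left₀ _ hS₂pos.le hp
    · intro h
      have hp : S₁ ^ D.card < S₂ ^ D.card :=
        pow_lt_pow_left₀ h hS₁pos.le (Finset.card_ne_zero.mpr hD)
      exact (mul_lt_mul_iff_right₀ hApos).mpr hp
  rw [key]
  have e₁ : ∑ ξ ∈ elim₁, P ξ = (∑ ξ ∈ elim₁, Real.exp (R ξ)) / Z := by
    simp [hP, Finset.sum_div]
  have e₂ : ∑ ξ ∈ elim₂, P ξ = (∑ ξ ∈ elim₂, Real.exp (R ξ)) / Z := by
    simp [hP, Finset.sum_div]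
  rw [e₁, e₂, div_lt_div_iff_of_pos_right hZpos]
  have h1 := hsplit elim₁
  have h2 := hsplit elim₂
  constructor <;> intro h <;> nlinarith
end
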